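/- Let (t_k) be a sequence of elements of (0, 1/2) ⊂ ℝ such that t_k > 3·∑_{l>k} t_l for every k (with the tail sums convergent). Then for nonempty finite sets a, b ⊆ ℕ and functions ε : a → {1,2}, δ : b → {1,2}, if ∑_{k∈a} ε(k)·t_k = ∑_{k∈b} δ(k)·t_k, then a = b and ε = δ. -/

import Mathlib

set_option maxHeartbeats 1000000

private lemma tail_bound (t : ℕ → ℝ) (ht : ∀ k, 0 < t k) (hsum : Summable t)
    (m : ℕ) (s : Finset ℕ) (c : ℕ → ℕ) (hc : ∀ k ∈ s, c k ≤ 2)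
    (hs : ∀ k ∈ s, m < k) :
    ∑ k ∈ s, (c k : ℝ) * t k ≤ 2 * ∑' l : ℕ, t (m + 1 + l) := by
  have hst : Summable (fun l => t (m + 1 + l)) := by simpa [Nat.add_comm] using (summable_nat_add_iff (m+1)).2 hsum
  have h1 : ∑ k ∈ s, (c k : ℝ) * t k ≤ ∑ k ∈ s, 2 * t k := by
    apply Finset.sum_le_sum
    intro k hk
    have h2 : (c k : ℝ) ≤ 2 := by exact_mod_cast hc k hk
    nlinarith [ht k]
  refine h1.trans ?_
  rw [← Finset.mul_sum]
  have hinj : ∀ x ∈ s, ∀ y ∈ s, x - (m+1) = y - (m+1) → x = y := by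
    intro x hx y hy h
    have hx1 := hs x hx; have hy1 := hs y hy
    omega
  have himg : ∑ j ∈ s.image (· - (m+1)), t (m + 1 + j) = ∑ k ∈ s, t k := by
    rw [Finset.sum_image hinj]
    apply Finset.sum_congr rfl
    intro k hk
    have := hs k hk
    congr 1
    omega
  have hle : ∑ j ∈ s.image (· - (m+1)), t (m + 1 + j) ≤ ∑' l : ℕ, t (m + 1 + l) :=
    Summable.sum_le_tsum _ (fun i _ => (ht _).le) hst
  rw [← himg] at *
  linarith

private lemma lower_bd (t : ℕ → ℝ) (ht : ∀ k, 0 < t k) (a : Finset ℕ)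
    (ε : ℕ → ℕ) (hε : ∀ k ∈ a, 1 ≤ ε k) (m : ℕ) (hm : m ∈ a) :
    (ε m : ℝ) * t m ≤ ∑ k ∈ a, (ε k : ℝ) * t k := by
  apply Finset.single_le_sum (f := fun k => (ε k : ℝ) * t k) _ hm
  intro k hk
  exact mul_nonneg (by positivity) (ht k).le

private lemma min_not_lt (t : ℕ → ℝ) (ht : ∀ k, 0 < t k) (hsum : Summable t)
    (hdom : ∀ k, t k > 3 * ∑' l : ℕ, t (k + 1 + l))
    (a b : Finset ℕ) (ha : a.Nonempty) (hb : b.Nonempty)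
    (ε δ : ℕ → ℕ) (hε : ∀ k ∈ a, ε k = 1 ∨ ε k = 2) (hδ : ∀ k ∈ b, δ k = 1 ∨ δ k = 2)
    (hlt : a.min' ha < b.min' hb) :
    ∑ k ∈ b, (δ k : ℝ) * t k < ∑ k ∈ a, (ε k : ℝ) * t k := by
  set m := a.min' ha with hmdef
  have hT : 0 ≤ ∑' l : ℕ, t (m + 1 + l) :=
    tsum_nonneg fun l => (ht _).le
  have hb2 : ∑ k ∈ b, (δ k : ℝ) * t k ≤ 2 * ∑' l : ℕ, t (m + 1 + l) := by
    apply tail_bound t ht hsum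
    · intro k hk; rcases hδ k hk with h | h <;> omega
    · intro k hk; exact lt_of_lt_of_le hlt (b.min'_le k hk)
  have ha2 : t m ≤ ∑ k ∈ a, (ε k : ℝ) * t k := by
    have h1 : (1:ℝ) ≤ ε m := by
      rcases hε m (a.min'_mem ha) with h | h <;> simp [h]
    have := lower_bd t ht a ε (fun k hk => by rcases hε k hk with h | h <;> omega)
      m (a.min'_mem ha)
    nlinarith [ht m]
  have := hdom m
  linarith

private lemma coeff_not_lt (t : ℕ → ℝ) (ht : ∀ k, 0 < t k) (hsum : Summable t)
    (hdom : ∀ k, t k > 3 * ∑' l : ℕ, t (k + 1 + l))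
    (a b : Finset ℕ) (m : ℕ) (hma : m ∈ a) (hmb : m ∈ b)
    (hma' : ∀ k ∈ a, m ≤ k) (hmb' : ∀ k ∈ b, m ≤ k)
    (ε δ : ℕ → ℕ) (hε : ∀ k ∈ a, ε k = 1 ∨ ε k = 2) (hδ : ∀ k ∈ b, δ k = 1 ∨ δ k = 2)
    (hlt : ε m < δ m) :
    ∑ k ∈ a, (ε k : ℝ) * t k < ∑ k ∈ b, (δ k : ℝ) * t k := by
  have hT : 0 ≤ ∑' l : ℕ, t (m + 1 + l) := tsum_nonneg fun l => (ht _).le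
  have hSa : ∑ k ∈ a.erase m, (ε k : ℝ) * t k ≤ 2 * ∑' l : ℕ, t (m + 1 + l) := by
    apply tail_bound t ht hsum
    · intro k hk; rcases hε k (Finset.mem_of_mem_erase hk) with h | h <;> omega
    · intro k hk
      have := hma' k (Finset.mem_of_mem_erase hk)
      have := Finset.ne_of_mem_erase hk
      omega
  have hSb : 0 ≤ ∑ k ∈ b.erase m, (δ k : ℝ) * t k := by
    apply Finset.sum_nonneg
    intro k hk
    have h1 : (0:ℝ) ≤ δ k := by positivity
    nlinarith [ht k]
  have hda : ((ε m : ℝ) + 1) ≤ δ m := by exact_mod_cast hlt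
  have hea := Finset.add_sum_erase a (fun k => (ε k : ℝ) * t k) hma
  have heb := Finset.add_sum_erase b (fun k => (δ k : ℝ) * t k) hmb
  have := hdom m
  have htm := ht m
  nlinarith [mul_le_mul_of_nonneg_right hda htm.le]

private lemma main_aux (t : ℕ → ℝ) (ht : ∀ k, 0 < t k) (hsum : Summable t)
    (hdom : ∀ k, t k > 3 * ∑' l : ℕ, t (k + 1 + l)) :
    ∀ (a b : Finset ℕ), a.Nonempty → b.Nonempty →
    ∀ (ε δ : ℕ → ℕ), (∀ k ∈ a, ε k = 1 ∨ ε k = 2) → (∀ k ∈ b, δ k = 1 ∨ δ k = 2) →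
    (∑ k ∈ a, (ε k : ℝ) * t k = ∑ k ∈ b, (δ k : ℝ) * t k) →
    a = b ∧ ∀ k ∈ a, ε k = δ k := by
  intro a
  induction a using Finset.strongInduction with
  | _ a IH =>
  intro b ha hb ε δ hε hδ heq
  -- minima coincide
  have hmn : a.min' ha = b.min' hb := by
    by_contra h
    rcases lt_or_gt_of_ne h with h | h
    · exact absurd heq (min_not_lt t ht hsum hdom a b ha hb ε δ hε hδ h).ne'
    · exact absurd heq (min_not_lt t ht hsum hdom b a hb ha δ ε hδ hε h).ne
  set m := a.min' ha with hmdef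
  have hma : m ∈ a := a.min'_mem ha
  have hmb : m ∈ b := hmn ▸ b.min'_mem hb
  have hma' : ∀ k ∈ a, m ≤ k := fun k hk => a.min'_le k hk
  have hmb' : ∀ k ∈ b, m ≤ k := fun k hk => hmn ▸ b.min'_le k hk
  have hcoeff : ε m = δ m := by
    by_contra h
    rcases lt_or_gt_of_ne h with h | h
    · exact absurd heq (coeff_not_lt t ht hsum hdom a b m hma hmb hma' hmb' ε δ hε hδ h).ne
    · exact absurd heq (coeff_not_lt t ht hsum hdom b a m hmb hma hmb' hma' δ ε hδ hε h).ne'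
  -- erase sums are equal
  have hea := Finset.add_sum_erase a (fun k => (ε k : ℝ) * t k) hma
  have heb := Finset.add_sum_erase b (fun k => (δ k : ℝ) * t k) hmb
  have hcr : (ε m : ℝ) = δ m := by exact_mod_cast hcoeff
  have herase : ∑ k ∈ a.erase m, (ε k : ℝ) * t k = ∑ k ∈ b.erase m, (δ k : ℝ) * t k := by
    nlinarith [ht m]
  have hpos : ∀ (s : Finset ℕ) (c : ℕ → ℕ), (∀ k ∈ s, c k = 1 ∨ c k = 2) → s.Nonempty →
      0 < ∑ k ∈ s, (c k : ℝ) * t k := by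
    intro s c hc hs
    apply Finset.sum_pos _ hs
    intro k hk
    have h1 : (1:ℝ) ≤ c k := by
      rcases hc k hk with h | h <;> simp [h]
    nlinarith [ht k]
  rcases Finset.eq_empty_or_nonempty (a.erase m) with hae | hae
  · rcases Finset.eq_empty_or_nonempty (b.erase m) with hbe | hbe
    · have haa : a = {m} := by
        rcases (Finset.erase_eq_empty_iff a m).1 hae with h | h
        · exact absurd h (Finset.nonempty_iff_ne_empty.1 ha)
        · exact h
      have hbb : b = {m} := by
        rcases (Finset.erase_eq_empty_iff b m).1 hbe with h | h
        · exact absurd h (Finset.nonempty_iff_ne_empty.1 hb)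
        · exact h
      refine ⟨haa.trans hbb.symm, ?_⟩
      intro k hk
      rw [haa] at hk
      simp at hk
      subst hk
      exact hcoeff
    · exfalso
      have := hpos (b.erase m) δ (fun k hk => hδ k (Finset.mem_of_mem_erase hk)) hbe
      rw [hae] at herase
      simp at herase
      linarith
  · rcases Finset.eq_empty_or_nonempty (b.erase m) with hbe | hbe
    · exfalso
      have := hpos (a.erase m) ε (fun k hk => hε k (Finset.mem_of_mem_erase hk)) hae
      rw [hbe] at herase
      simp at herase
      linarith
    · have := IH (a.erase m) (Finset.erase_ssubset hma) (b.erase m) hae hbe ε δ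
        (fun k hk => hε k (Finset.mem_of_mem_erase hk))
        (fun k hk => hδ k (Finset.mem_of_mem_erase hk)) herase
      obtain ⟨hset, hcoe⟩ := this
      constructor
      · have : insert m (a.erase m) = insert m (b.erase m) := by rw [hset]
        rwa [Finset.insert_erase hma, Finset.insert_erase hmb] at this
      · intro k hk
        by_cases hkm : k = m
        · subst hkm; exact hcoeff
        · exact hcoe k (Finset.mem_erase.2 ⟨hkm, hk⟩)

/-- If `(t k)` is a sequence of reals in `(0, 1/2)` with `t k > 3 ∑_{l>k} t l`
for all `k`, then sums `∑_{k∈a} ε k • t k` with coefficients in `{1,2}` over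
nonempty finite index sets determine both the index set and the coefficients. -/
theorem coeff_sums_unique (t : ℕ → ℝ) (ht : ∀ k, t k ∈ Set.Ioo (0 : ℝ) (1 / 2))
    (hsum : Summable t) (hdom : ∀ k, t k > 3 * ∑' l : ℕ, t (k + 1 + l))
    (a b : Finset ℕ) (ha : a.Nonempty) (hb : b.Nonempty)
    (ε δ : ℕ → ℕ) (hε : ∀ k ∈ a, ε k = 1 ∨ ε k = 2) (hδ : ∀ k ∈ b, δ k = 1 ∨ δ k = 2)
    (heq : ∑ k ∈ a, (ε k : ℝ) * t k = ∑ k ∈ b, (δ k : ℝ) * t k) :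
    a = b ∧ ∀ k ∈ a, ε k = δ k := by
  exact main_aux t (fun k => (ht k).1) hsum hdom a b ha hb ε δ hε hδ heq
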